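/- Let K be a finite set of components, n ∈ ℕ the number of stages, φ : K × {0, ..., n−1} → ℝ the stage-dependent component failure probabilities, and τ : K → {0, ..., n} the failure-stage map (τ(k) = j < n means component k fails at stage j; τ(k) = n means component k never fails along the path). Then the stage-wise double product equals the component-wise product of per-component factors: ∏_{j=0}^{n−1} [ ∏_{k : τ(k) = j} φ(k, j) · ∏_{k : τ(k) > j} (1 − φ(k, j)) ] = ∏_{k ∈ K} Γ(k), where Γ(k) = ∏_{j=0}^{τ(k)−1} (1 − φ(k, j)) if τ(k) = n, and Γ(k) = φ(k, τ(k)) · ∏_{j=0}^{τ(k)−1} (1 − φ(k, j)) if τ(k) < n. -/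

import Mathlib

/-- The stage-wise double product of component failure/survival probabilities
along a cascading-outage path equals the component-wise product of per-component
factors `Γ(k)`:  here `τ k < n` means component `k` fails exactly at stage
`τ k` (surviving all earlier stages), and `τ k = n` means it never fails. -/
theorem stagewise_eq_componentwise_product
    {K : Type*} [Fintype K] (n : ℕ)
    (φ : K → ℕ → ℝ) (τ : K → ℕ) (hτ : ∀ k, τ k ≤ n) :
    ∏ j ∈ Finset.range n,
        ((∏ k ∈ Finset.univ.filter (fun k => τ k = j), φ k j) *
          ∏ k ∈ Finset.univ.filter (fun k => j < τ k), (1 - φ k j))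
      = ∏ k : K,
          (if τ k = n then ∏ j ∈ Finset.range (τ k), (1 - φ k j)
           else φ k (τ k) * ∏ j ∈ Finset.range (τ k), (1 - φ k j)) := by
  have key : ∀ j, ((∏ k ∈ Finset.univ.filter (fun k => τ k = j), φ k j) *
      ∏ k ∈ Finset.univ.filter (fun k => j < τ k), (1 - φ k j))
      = ∏ k : K, (if τ k = j then φ k j else if j < τ k then 1 - φ k j else 1) := by
    intro j
    rw [Finset.prod_filter, Finset.prod_filter, ← Finset.prod_mul_distrib]
    refine Finset.prod_congr rfl fun k _ => ?_
    rcases lt_trichotomy (τ k) j with h | h | h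
    · simp [h.ne, not_lt.2 h.le]
    · simp [h, lt_irrefl]
    · simp [h.ne', h]
  simp_rw [key]
  rw [Finset.prod_comm]
  refine Finset.prod_congr rfl fun k _ => ?_
  by_cases h : τ k = n
  · rw [if_pos h]
    refine Finset.prod_congr (by rw [h]) fun j hj => ?_
    rw [Finset.mem_range] at hj
    have h1 : j < τ k := by omega
    rw [if_neg (by omega), if_pos h1]
  · have hlt : τ k < n := lt_of_le_of_ne (hτ k) h
    rw [if_neg h, ← Finset.prod_range_mul_prod_Ico _ (Nat.succ_le_of_lt hlt)]
    have h2 : ∏ j ∈ Finset.Ico (τ k + 1) n,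
        (if τ k = j then φ k j else if j < τ k then 1 - φ k j else 1) = 1 := by
      refine Finset.prod_eq_one fun j hj => ?_
      rw [Finset.mem_Ico] at hj
      rw [if_neg (by omega), if_neg (by omega)]
    rw [h2, mul_one, Finset.prod_range_succ, if_pos rfl, mul_comm]
    congr 1
    refine Finset.prod_congr rfl fun j hj => ?_
    rw [Finset.mem_range] at hj
    rw [if_neg (by omega), if_pos hj]
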